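/- Fix any linear order on the set of indecomposable permutations and, for n ≥ 1, let ℓ_n be the number of permutations of size exactly n whose word of indecomposable blocks is a Lyndon word over this ordered alphabet. Then the identity of formal power series ∏_{n≥1} (1−x^n)^{−ℓ_n} = Σ_{n≥0} n!·x^n holds. -/

import Mathlib

open Equiv MeasureTheory

/-- A permutation of size `n` together with its size. -/
abbrev PermSig := Σ n : ℕ, Equiv.Perm (Fin n)

/-- The direct sum of two permutations. -/
def permDirectSum {m n : ℕ} (π₁ : Equiv.Perm (Fin m)) (π₂ : Equiv.Perm (Fin n)) :
    Equiv.Perm (Fin (m + n)) :=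
  Equiv.permCongr finSumFinEquiv (Equiv.sumCongr π₁ π₂)

def sigSum (p q : PermSig) : PermSig := ⟨p.1 + q.1, permDirectSum p.2 q.2⟩

/-- Direct sum of a list of permutations. -/
def sigSumList : List PermSig → PermSig
  | [] => ⟨0, 1⟩
  | [p] => p
  | p :: q :: l => sigSum p (sigSumList (q :: l))

/-- A permutation is decomposable if it is a direct sum of two permutations
(each of size at least `1`). -/
def IsDecomposable {n : ℕ} (π : Equiv.Perm (Fin n)) : Prop :=
  ∃ (a b : ℕ) (_ : 0 < a) (_ : 0 < b) (h : a + b = n)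
    (π₁ : Equiv.Perm (Fin a)) (π₂ : Equiv.Perm (Fin b)),
    π = Equiv.permCongr (finCongr h) (permDirectSum π₁ π₂)

def IsIndecomposable {n : ℕ} (π : Equiv.Perm (Fin n)) : Prop :=
  1 ≤ n ∧ ¬ IsDecomposable π

/-- The alphabet `Σ` of indecomposable permutations. -/
def Indec : Type := {p : PermSig // IsIndecomposable p.2}

/-- `l` is the word of indecomposable blocks of `π`. -/
def IsBlockDecomposition {n : ℕ} (π : Equiv.Perm (Fin n)) (l : List Indec) : Prop :=
  sigSumList (l.map Subtype.val) = ⟨n, π⟩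

/-- The sequence of values of a permutation. -/
def permWord {n : ℕ} (π : Equiv.Perm (Fin n)) : List ℕ :=
  (List.finRange n).map fun i => (π i : ℕ)

/-- The order on the alphabet of indecomposable permutations: smaller sizes first,
permutations of the same size ordered lexicographically as sequences of values. -/
def sigLt (p q : PermSig) : Prop :=
  p.1 < q.1 ∨ (p.1 = q.1 ∧ List.Lex (· < ·) (permWord p.2) (permWord q.2))

def indecLt (p q : Indec) : Prop := sigLt p.1 q.1

/-- A nonempty word is Lyndon if no proper nonempty suffix of it is smaller
(w.r.t. the lexicographic order induced by `r`) than the word itself. -/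
def IsLyndonWord {α : Type*} (r : α → α → Prop) (w : List α) : Prop :=
  w ≠ [] ∧ ∀ i, 0 < i → i < w.length → ¬ List.Lex r (w.drop i) w

/-- A permutation is Lyndon w.r.t. an order `r` on indecomposable permutations
if its word of indecomposable blocks is a Lyndon word. -/
def IsLyndonPermWrt (r : Indec → Indec → Prop) {n : ℕ} (π : Equiv.Perm (Fin n)) : Prop :=
  ∃ l : List Indec, IsBlockDecomposition π l ∧ IsLyndonWord r l

def IsLyndonPerm {n : ℕ} (π : Equiv.Perm (Fin n)) : Prop := IsLyndonPermWrt indecLt π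

/-- `π <_L π'`: the word of blocks of `π` is lexicographically smaller than that of `π'`. -/
def permLtL (p q : PermSig) : Prop :=
  ∃ lp lq : List Indec, IsBlockDecomposition p.2 lp ∧ IsBlockDecomposition q.2 lq ∧
    List.Lex indecLt lp lq

def permLeL (p q : PermSig) : Prop :=
  ∃ lp lq : List Indec, IsBlockDecomposition p.2 lp ∧ IsBlockDecomposition q.2 lq ∧
    (lp = lq ∨ List.Lex indecLt lp lq)

/-- The pattern induced by the set `S` in `σ` is `τ`. -/
def IsPatternOf {N m : ℕ} (σ : Equiv.Perm (Fin N)) (S : Finset (Fin N))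
    (τ : Equiv.Perm (Fin m)) : Prop :=
  ∃ h : S.card = m, ∀ i j : Fin m,
    τ i < τ j ↔ σ (S.orderEmbOfFin h i) < σ (S.orderEmbOfFin h j)

/-- A permuton is a Borel probability measure on `[0,1]²` with uniform marginals. -/
structure Permuton where
  μ : Measure (ℝ × ℝ)
  prob : IsProbabilityMeasure μ
  marg_fst : ∀ a b : ℝ, 0 ≤ a → a ≤ b → b ≤ 1 →
    μ (Set.Icc a b ×ˢ Set.Icc (0:ℝ) 1) = ENNReal.ofReal (b - a)
  marg_snd : ∀ a b : ℝ, 0 ≤ a → a ≤ b → b ≤ 1 →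
    μ (Set.Icc (0:ℝ) 1 ×ˢ Set.Icc a b) = ENNReal.ofReal (b - a)

/-- The density of a pattern `σ` in a permuton `P`: the probability that `n` points
sampled independently from `P`, sorted by their first coordinates, have their second
coordinates ordered according to `σ`. -/
noncomputable def permutonDensity {n : ℕ} (σ : Equiv.Perm (Fin n)) (P : Permuton) : ℝ :=
  haveI := P.prob
  ((Measure.pi fun _ : Fin n => P.μ)
    {p : Fin n → ℝ × ℝ | ∃ e : Equiv.Perm (Fin n),
      (∀ i j : Fin n, i < j → (p (e i)).1 < (p (e j)).1) ∧
      (∀ i j : Fin n, σ i < σ j ↔ (p (e i)).2 < (p (e j)).2)}).toReal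

section PermSigBasics

/-- value of a sigma-permutation at a natural number -/
def pval (p : PermSig) (i : ℕ) : ℕ := if h : i < p.1 then (p.2 ⟨i, h⟩ : ℕ) else i

theorem pval_lt (p : PermSig) {i : ℕ} (h : i < p.1) : pval p i < p.1 := by
  simp only [pval, dif_pos h]; exact (p.2 ⟨i, h⟩).2

theorem permsig_ext {p q : PermSig} (h1 : p.1 = q.1) (h2 : ∀ i, pval p i = pval q i) :
    p = q := by
  obtain ⟨m, π⟩ := p; obtain ⟨n, σ⟩ := q
  cases h1
  refine Sigma.ext rfl (heq_of_eq ?_)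
  ext i
  have := h2 i.1
  simpa [pval, i.2] using this

theorem permDirectSum_castAdd {m n : ℕ} (f : Equiv.Perm (Fin m)) (g : Equiv.Perm (Fin n))
    (i : Fin m) : permDirectSum f g (Fin.castAdd n i) = Fin.castAdd n (f i) := by
  simp only [permDirectSum, Equiv.permCongr_apply, finSumFinEquiv_symm_apply_castAdd]
  rw [show (Equiv.sumCongr f g) (Sum.inl i) = Sum.inl (f i) from rfl, finSumFinEquiv_apply_left]

theorem permDirectSum_natAdd {m n : ℕ} (f : Equiv.Perm (Fin m)) (g : Equiv.Perm (Fin n))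
    (i : Fin n) : permDirectSum f g (Fin.natAdd m i) = Fin.natAdd m (g i) := by
  simp only [permDirectSum, Equiv.permCongr_apply, finSumFinEquiv_symm_apply_natAdd]
  rw [show (Equiv.sumCongr f g) (Sum.inr i) = Sum.inr (g i) from rfl, finSumFinEquiv_apply_right]

theorem pval_sigSum (p q : PermSig) (i : ℕ) :
    pval (sigSum p q) i =
      if h : i < p.1 then pval p i
      else if h2 : i < p.1 + q.1 then p.1 + pval q (i - p.1) else i := by
  by_cases h : i < p.1
  · have hi : i < p.1 + q.1 := lt_of_lt_of_le h (Nat.le_add_right _ _)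
    simp only [pval, dif_pos h, dif_pos (show i < (sigSum p q).1 from hi)]
    show ((permDirectSum p.2 q.2) ⟨i, hi⟩ : ℕ) = _
    have : (⟨i, hi⟩ : Fin (p.1 + q.1)) = Fin.castAdd q.1 ⟨i, h⟩ := rfl
    rw [this, permDirectSum_castAdd]
    rfl
  · by_cases h2 : i < p.1 + q.1
    · have hq : i - p.1 < q.1 := by omega
      simp only [pval, dif_neg h, dif_pos (show i < (sigSum p q).1 from h2), dif_pos h2, dif_pos hq]
      show ((permDirectSum p.2 q.2) ⟨i, h2⟩ : ℕ) = _
      have : (⟨i, h2⟩ : Fin (p.1 + q.1)) = Fin.natAdd p.1 ⟨i - p.1, hq⟩ := by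
        apply Fin.ext; simp; omega
      rw [this, permDirectSum_natAdd]
      rfl
    · simp only [pval, dif_neg h, dif_neg (show ¬ i < (sigSum p q).1 from h2), dif_neg h2]

/-- `k` is a cut point of `p`. -/
def IsCut (p : PermSig) (k : ℕ) : Prop := k ≤ p.1 ∧ ∀ i, i < k → pval p i < k

theorem isCut_top (p : PermSig) : IsCut p p.1 :=
  ⟨le_rfl, fun i hi => pval_lt p hi⟩

theorem sigSum_triv (p : PermSig) : sigSum p ⟨0, 1⟩ = p := by
  refine permsig_ext rfl fun i => ?_
  rw [pval_sigSum]
  by_cases h : i < p.1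
  · simp [h]
  · simp only [dif_neg h]
    have h2 : ¬ i < p.1 + 0 := by omega
    simp [h, h2, pval]

theorem sigSumList_cons (p : PermSig) (l : List PermSig) :
    sigSumList (p :: l) = sigSum p (sigSumList l) := by
  cases l with
  | nil => exact (sigSum_triv p).symm
  | cons q t => rfl

theorem sigSumList_fst (l : List PermSig) :
    (sigSumList l).1 = (l.map Sigma.fst).sum := by
  induction l with
  | nil => rfl
  | cons p t ih => rw [sigSumList_cons]; simp [sigSum, ih]

end PermSigBasics

section Cuts

theorem pval_of_ge (p : PermSig) {i : ℕ} (h : p.1 ≤ i) : pval p i = i := by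
  simp [pval, Nat.not_lt.mpr h]

theorem pval_inj (p : PermSig) {a b : ℕ} (ha : a < p.1) (hb : b < p.1)
    (h : pval p a = pval p b) : a = b := by
  simp only [pval, dif_pos ha, dif_pos hb] at h
  have := p.2.injective (Fin.val_injective h)
  exact congrArg Fin.val this

theorem isCut_ge {p : PermSig} {k : ℕ} (hc : IsCut p k) {i : ℕ} (hki : k ≤ i)
    (hin : i < p.1) : k ≤ pval p i := by
  by_contra hlt
  push_neg at hlt
  have hkp : k ≤ p.1 := hc.1
  set f : Fin k → Fin k := fun j => ⟨pval p j.1, hc.2 _ j.2⟩ with hf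
  have hinj : Function.Injective f := by
    intro a b hab
    have : pval p a.1 = pval p b.1 := congrArg Fin.val hab
    exact Fin.ext (pval_inj p (lt_of_lt_of_le a.2 hkp) (lt_of_lt_of_le b.2 hkp) this)
  obtain ⟨j, hj⟩ := (Finite.injective_iff_surjective.mp hinj) ⟨pval p i, hlt⟩
  have : pval p j.1 = pval p i := congrArg Fin.val hj
  have := pval_inj p (lt_of_lt_of_le j.2 hkp) hin this
  omega

/-- Splitting a permutation at a cut point. -/
theorem isCut_split {p : PermSig} {k : ℕ} (hc : IsCut p k) :
    ∃ q r : PermSig, q.1 = k ∧ r.1 = p.1 - k ∧ p = sigSum q r := by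
  have hkp : k ≤ p.1 := hc.1
  set f1 : Fin k → Fin k := fun j => ⟨pval p j.1, hc.2 _ j.2⟩ with hf1
  have hinj1 : Function.Injective f1 := fun a b hab =>
    Fin.ext (pval_inj p (lt_of_lt_of_le a.2 hkp) (lt_of_lt_of_le b.2 hkp)
      (congrArg Fin.val hab))
  set f2 : Fin (p.1 - k) → Fin (p.1 - k) := fun j =>
    ⟨pval p (k + j.1) - k, by
      have h1 : k + j.1 < p.1 := by omega
      have h2 := pval_lt p h1
      have h3 := isCut_ge hc (Nat.le_add_right k j.1) h1
      omega⟩ with hf2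
  have hinj2 : Function.Injective f2 := by
    intro a b hab
    have h1a : k + a.1 < p.1 := by omega
    have h1b : k + b.1 < p.1 := by omega
    have h3a := isCut_ge hc (Nat.le_add_right k a.1) h1a
    have h3b := isCut_ge hc (Nat.le_add_right k b.1) h1b
    have : pval p (k + a.1) - k = pval p (k + b.1) - k := congrArg Fin.val hab
    have : pval p (k + a.1) = pval p (k + b.1) := by omega
    have := pval_inj p h1a h1b this
    exact Fin.ext (by omega)
  refine ⟨⟨k, Equiv.ofBijective f1 (Finite.injective_iff_bijective.mp hinj1)⟩,
    ⟨p.1 - k, Equiv.ofBijective f2 (Finite.injective_iff_bijective.mp hinj2)⟩, rfl, rfl, ?_⟩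
  refine permsig_ext (by show p.1 = k + (p.1 - k); omega) fun i => ?_
  rw [pval_sigSum]
  by_cases h : i < k
  · simp only [dif_pos h]
    show pval p i = _
    simp [pval, h, Equiv.ofBijective_apply, hf1, lt_of_lt_of_le h hkp]
  · simp only [dif_neg h]
    by_cases h2 : i < k + (p.1 - k)
    · simp only [dif_pos h2]
      have hik : i - k < p.1 - k := by omega
      have : pval (⟨p.1 - k, Equiv.ofBijective f2 (Finite.injective_iff_bijective.mp hinj2)⟩ : PermSig) (i - k) =
          pval p (k + (i - k)) - k := by
        simp [pval, hik, Equiv.ofBijective_apply, hf2, show k + (i - k) < p.1 by omega]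
      rw [this]
      have h1 : k + (i - k) < p.1 := by omega
      have h3 := isCut_ge hc (Nat.le_add_right k (i - k)) h1
      have : k + (i - k) = i := by omega
      rw [this] at h3 ⊢
      omega
    · simp only [dif_neg h2]
      have hge : p.1 ≤ i := by omega
      exact pval_of_ge p hge

theorem pval_sigSum_left (p q : PermSig) {i : ℕ} (hi : i < p.1) :
    pval (sigSum p q) i = pval p i := by
  rw [pval_sigSum, dif_pos hi]

theorem pval_sigSum_right (p q : PermSig) {i : ℕ} (hi : i < q.1) :
    pval (sigSum p q) (p.1 + i) = p.1 + pval q i := by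
  rw [pval_sigSum, dif_neg (by omega), dif_pos (by omega), Nat.add_sub_cancel_left]

theorem isCut_sigSum_left {p q : PermSig} {k : ℕ} (hk : k ≤ p.1) :
    IsCut (sigSum p q) k ↔ IsCut p k := by
  have hval : ∀ i, i < k → pval (sigSum p q) i = pval p i := by
    intro i hi
    rw [pval_sigSum, dif_pos (lt_of_lt_of_le hi hk)]
  constructor
  · exact fun hc => ⟨hk, fun i hi => by rw [← hval i hi]; exact hc.2 i hi⟩
  · exact fun hc => ⟨le_trans hk (Nat.le_add_right _ _), fun i hi => by
      rw [hval i hi]; exact hc.2 i hi⟩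

theorem isCut_sigSum_right {p q : PermSig} {k : ℕ} (hk : p.1 ≤ k) (hk2 : k ≤ p.1 + q.1) :
    IsCut (sigSum p q) k ↔ IsCut q (k - p.1) := by
  constructor
  · intro hc
    refine ⟨by omega, fun i hi => ?_⟩
    have h1 : p.1 + i < k := by omega
    have := hc.2 _ h1
    rw [pval_sigSum, dif_neg (by omega), dif_pos (by omega)] at this
    have h2 : p.1 + i - p.1 = i := by omega
    rw [h2] at this
    omega
  · intro hc
    refine ⟨hk2, fun i hi => ?_⟩
    rw [pval_sigSum]
    by_cases h : i < p.1
    · simp only [dif_pos h]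
      exact lt_of_lt_of_le (pval_lt p h) hk
    · rw [dif_neg h, dif_pos (by omega)]
      have := hc.2 (i - p.1) (by omega)
      omega

theorem isCut_fst (p q : PermSig) : IsCut (sigSum p q) p.1 :=
  (isCut_sigSum_left le_rfl).mpr (isCut_top p)

/-- decomposability in `PermSig` terms -/
def IsDecomposable' (p : PermSig) : Prop :=
  ∃ q r : PermSig, 0 < q.1 ∧ 0 < r.1 ∧ p = sigSum q r

theorem decomposable_iff {n : ℕ} (π : Equiv.Perm (Fin n)) :
    IsDecomposable π ↔ IsDecomposable' ⟨n, π⟩ := by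
  constructor
  · rintro ⟨a, b, ha, hb, h, π₁, π₂, heq⟩
    refine ⟨⟨a, π₁⟩, ⟨b, π₂⟩, ha, hb, ?_⟩
    subst h
    have : Equiv.permCongr (finCongr rfl) (permDirectSum π₁ π₂) = permDirectSum π₁ π₂ := by
      ext i
      simp [Equiv.permCongr_apply]
    rw [heq, this]
    rfl
  · rintro ⟨q, r, hq, hr, heq⟩
    have h1 : n = q.1 + r.1 := congrArg Sigma.fst heq
    subst h1
    have h2 : π = (sigSum q r).2 := by
      have := (Sigma.mk.inj_iff.mp heq).2
      exact eq_of_heq this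
    refine ⟨q.1, r.1, hq, hr, rfl, q.2, r.2, ?_⟩
    rw [h2]
    ext i
    simp [Equiv.permCongr_apply, sigSum]
    rfl

theorem decomposable_iff_cut (p : PermSig) :
    IsDecomposable' p ↔ ∃ k, 0 < k ∧ k < p.1 ∧ IsCut p k := by
  constructor
  · rintro ⟨q, r, hq, hr, rfl⟩
    exact ⟨q.1, hq, by simp [sigSum]; omega, isCut_fst q r⟩
  · rintro ⟨k, hk0, hkn, hc⟩
    obtain ⟨q, r, hq, hr, heq⟩ := isCut_split hc
    exact ⟨q, r, by omega, by omega, heq⟩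

theorem sigSum_cancel {q r q' r' : PermSig} (h : sigSum q r = sigSum q' r')
    (hq : q.1 = q'.1) : q = q' ∧ r = r' := by
  have hfst : q.1 + r.1 = q'.1 + r'.1 := congrArg Sigma.fst h
  have hr : r.1 = r'.1 := by omega
  have hval : ∀ i, pval (sigSum q r) i = pval (sigSum q' r') i := fun i => by rw [h]
  constructor
  · refine permsig_ext hq fun i => ?_
    by_cases hi : i < q.1
    · have := hval i
      rw [pval_sigSum, pval_sigSum, dif_pos hi, dif_pos (hq ▸ hi)] at this
      exact this
    · rw [pval_of_ge q (by omega), pval_of_ge q' (by omega)]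
  · refine permsig_ext hr fun i => ?_
    by_cases hi : i < r.1
    · have h5 := hval (q.1 + i)
      rw [pval_sigSum_right q r hi, hq, pval_sigSum_right q' r' (hr ▸ hi)] at h5
      omega
    · rw [pval_of_ge r (by omega), pval_of_ge r' (by omega)]

end Cuts

section BlockDecomposition

theorem indec_size_pos (a : Indec) : 0 < a.1.1 := a.2.1

theorem indec_not_decomposable' (a : Indec) : ¬ IsDecomposable' a.1 := by
  have := a.2.2
  rw [decomposable_iff] at this
  exact this

/-- Existence of block decompositions. -/
theorem bd_exists (p : PermSig) : ∃ l : List Indec, sigSumList (l.map Subtype.val) = p := by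
  generalize hn : p.1 = n
  induction n using Nat.strong_induction_on generalizing p with
  | _ n ih =>
  rcases Nat.eq_zero_or_pos n with h0 | hpos
  · refine ⟨[], ?_⟩
    subst h0
    refine (permsig_ext (by rw [hn]; rfl) fun i => ?_).symm
    rw [pval_of_ge p (by omega), pval_of_ge _ (by exact Nat.zero_le _)]
  · classical
    have hex : ∃ k, 0 < k ∧ IsCut p k := ⟨p.1, hn ▸ hpos, isCut_top p⟩
    set k₀ := Nat.find hex with hk₀
    obtain ⟨hk0pos, hk0cut⟩ := Nat.find_spec hex
    obtain ⟨q, r, hq1, hr1, heq⟩ := isCut_split hk0cut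
    have hqindec : IsIndecomposable q.2 := by
      refine ⟨by omega, ?_⟩
      rw [decomposable_iff]
      rintro hdec
      rw [decomposable_iff_cut] at hdec
      obtain ⟨j, hj0, hjq, hjc⟩ := hdec
      have hjq' : j < q.1 := hjq
      have hjc' : IsCut q j := hjc
      have hcutp : IsCut p j := by
        rw [heq]
        exact (isCut_sigSum_left (by omega)).mpr hjc'
      exact Nat.find_min hex (m := j) (by omega) ⟨hj0, hcutp⟩
    have hrsize : r.1 < n := by
      have : k₀ ≤ p.1 := hk0cut.1
      omega
    obtain ⟨t, ht⟩ := ih r.1 (by omega) r rfl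
    refine ⟨⟨q, hqindec⟩ :: t, ?_⟩
    erw [List.map_cons, sigSumList_cons, ht]
    exact heq.symm

theorem head_size_le {a b : Indec} {X Y : PermSig}
    (h : sigSum a.1 X = sigSum b.1 Y) : a.1.1 ≤ b.1.1 := by
  by_contra hlt
  push_neg at hlt
  have hcut : IsCut (sigSum a.1 X) b.1.1 := by rw [h]; exact isCut_fst _ _
  have hcut2 : IsCut a.1 b.1.1 := (isCut_sigSum_left (le_of_lt hlt)).mp hcut
  have : IsDecomposable' a.1 := by
    rw [decomposable_iff_cut]
    exact ⟨b.1.1, indec_size_pos b, hlt, hcut2⟩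
  exact indec_not_decomposable' a this

/-- Uniqueness of block decompositions. -/
theorem bd_unique : ∀ l l' : List Indec,
    sigSumList (l.map Subtype.val) = sigSumList (l'.map Subtype.val) → l = l' := by
  intro l
  induction l with
  | nil =>
    intro l' h
    cases l' with
    | nil => rfl
    | cons b t' =>
      exfalso
      have := congrArg Sigma.fst h
      erw [List.map_cons, sigSumList_cons] at this
      simp only [sigSumList, sigSum] at this
      have := indec_size_pos b
      have h0 : (sigSumList (List.map Subtype.val ([] : List Indec))).fst = 0 := rfl
      omega
  | cons a t ih =>
    intro l' h
    cases l' with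
    | nil =>
      exfalso
      have := congrArg Sigma.fst h
      erw [List.map_cons, sigSumList_cons] at this
      simp only [sigSumList, sigSum] at this
      have := indec_size_pos a
      have h0 : (sigSumList (List.map Subtype.val ([] : List Indec))).fst = 0 := rfl
      omega
    | cons b t' =>
      erw [List.map_cons, List.map_cons, sigSumList_cons, sigSumList_cons] at h
      have hsize : a.1.1 = b.1.1 :=
        le_antisymm (head_size_le h) (head_size_le h.symm)
      obtain ⟨hab, hXY⟩ := sigSum_cancel h hsize
      exact congrArg₂ _ (Subtype.ext hab) (ih t' hXY)

end BlockDecomposition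

section Lyndon

set_option linter.deprecated false

variable {α : Type*} (r : α → α → Prop)

/-- Lyndon word: strictly smaller than each proper nonempty suffix. -/
def Lyn (w : List α) : Prop :=
  w ≠ [] ∧ ∀ s, s <:+ w → s ≠ [] → s ≠ w → List.Lex r w s

variable [hsto : IsStrictTotalOrder α r]

theorem lex_sto : IsStrictTotalOrder (List α) (List.Lex r) :=
  by haveI := hsto; exact { isStrictWeakOrder_of_isOrderConnected with }

theorem lex_trans {x y z : List α} (h1 : List.Lex r x y) (h2 : List.Lex r y z) :
    List.Lex r x z :=
  (lex_sto r).toIsTrans.trans x y z h1 h2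

theorem lex_asymm {x y : List α} (h1 : List.Lex r x y) (h2 : List.Lex r y x) : False :=
  (lex_sto r).toIrrefl.irrefl x (lex_trans r h1 h2)

theorem lex_trich (x y : List α) : List.Lex r x y ∨ x = y ∨ List.Lex r y x :=
  haveI := lex_sto r; trichotomous_of (List.Lex r) x y

theorem lex_append_of_ne_nil {u t : List α} (ht : t ≠ []) : List.Lex r u (u ++ t) := by
  induction u with
  | nil => cases t with | nil => exact absurd rfl ht | cons a l => exact List.Lex.nil
  | cons a l ih => exact List.Lex.cons ih

theorem lex_of_prefix {u v : List α} (h : u <+: v) (hne : u ≠ v) : List.Lex r u v := by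
  obtain ⟨t, rfl⟩ := h
  refine lex_append_of_ne_nil r fun h0 => hne (by simp [h0])

theorem lex_strict : ∀ {u v : List α}, List.Lex r u v → ¬ u <+: v →
    ∀ x y, List.Lex r (u ++ x) (v ++ y) := by
  intro u v h
  induction h with
  | nil => intro hp; exact absurd (List.nil_prefix) hp
  | @rel a l₁ b l₂ hab => intro _ x y; exact List.Lex.rel hab
  | @cons a l₁ l₂ h ih =>
    intro hp x y
    exact List.Lex.cons (ih (fun hpre => hp (List.cons_prefix_cons.mpr ⟨rfl, hpre⟩)) x y)

theorem suffix_append_cases {s u v : List α} (h : s <:+ u ++ v) :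
    s <:+ v ∨ ∃ s', s' <:+ u ∧ s' ≠ [] ∧ s = s' ++ v := by
  by_cases hlen : s.length ≤ v.length
  · exact Or.inl (List.suffix_of_suffix_length_le h (List.suffix_append u v) hlen)
  · right
    obtain ⟨t, ht⟩ := h
    have hlu : t.length ≤ u.length := by
      have := congrArg List.length ht
      simp at this
      omega
    have hs : s = u.drop t.length ++ v := by
      have h1 : s = (t ++ s).drop t.length := by simp
      rw [ht, List.drop_append, Nat.sub_eq_zero_of_le hlu,
        List.drop_zero] at h1
      exact h1
    have hlens := congrArg List.length ht
    simp only [List.length_append] at hlens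
    refine ⟨u.drop t.length, List.drop_suffix _ _, ?_, hs⟩
    intro h0
    have := congrArg List.length h0
    simp only [List.length_drop, List.length_nil] at this
    omega

theorem lyn_singleton (a : α) : Lyn r [a] := by
  refine ⟨by simp, fun s hs hne hne' => ?_⟩
  have h1 := hs.length_le
  have h2 : s.length = 1 := by
    cases s with
    | nil => exact absurd rfl hne
    | cons x t =>
      have h3 : t.length + 1 ≤ 1 := by simpa using h1
      simp only [List.length_cons]
      omega
  exact absurd (hs.eq_of_length (by simpa using h2)) hne'

/-- Key merge lemma: concatenation of two Lyndon words with `u < v` is Lyndon. -/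
theorem lyn_append {u v : List α} (hu : Lyn r u) (hv : Lyn r v)
    (huv : List.Lex r u v) : Lyn r (u ++ v) := by
  have hune := hu.1
  have hvne := hv.1
  have key : List.Lex r (u ++ v) v := by
    by_cases hp : u <+: v
    · obtain ⟨t, rfl⟩ := hp
      have htne : t ≠ [] := by
        rintro rfl
        rw [List.append_nil] at huv
        exact (lex_sto r).toIrrefl.irrefl u huv
      have htut : t ≠ u ++ t := by
        intro h0
        have := congrArg List.length h0
        simp only [List.length_append] at this
        exact hune (List.length_eq_zero_iff.mp (by omega))
      have hlt : List.Lex r (u ++ t) t := hv.2 t (List.suffix_append u t) htne htut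
      exact List.Lex.append_left r hlt u
    · have h0 := lex_strict r huv hp v []
      rw [List.append_nil] at h0
      exact h0
  refine ⟨by simp [hune], fun s hs hne hne' => ?_⟩
  rcases suffix_append_cases hs with hsv | ⟨s', hs', hs'ne, rfl⟩
  · rcases eq_or_ne s v with rfl | hsv'
    · exact key
    · exact lex_trans r key (hv.2 s hsv hne hsv')
  · have hs'u : s' ≠ u := by
      rintro rfl
      exact hne' rfl
    have h1 : List.Lex r u s' := hu.2 s' hs' hs'ne hs'u
    have h2 : ¬ u <+: s' := by
      intro hp
      have h3 := hs'.length_le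
      have h4 := hp.length_le
      have := hp.eq_of_length (by
        have : s'.length ≤ u.length := hs'.length_le
        omega)
      exact hs'u this.symm
    have := lex_strict r h1 h2 v v
    exact this

/-- Equivalence with the indexed definition. -/
theorem isLyndonWord_iff_lyn (w : List α) : IsLyndonWord r w ↔ Lyn r w := by
  constructor
  · rintro ⟨hne, h⟩
    refine ⟨hne, fun s hs hsne hsw => ?_⟩
    have hlt : s.length < w.length := by
      rcases Nat.lt_or_ge s.length w.length with h' | h'
      · exact h'
      · exact absurd (hs.eq_of_length (le_antisymm hs.length_le h')) hsw
    obtain ⟨t, ht⟩ := hs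
    have hdrop : w.drop t.length = s := by rw [← ht]; simp
    have hsl : 0 < s.length := List.length_pos_iff.mpr hsne
    have hwl := congrArg List.length ht
    simp only [List.length_append] at hwl
    have h2 := h t.length (by omega) (by omega)
    rw [hdrop] at h2
    rcases lex_trich r s w with h3 | h3 | h3
    · exact absurd h3 h2
    · exact absurd h3 hsw
    · exact h3
  · rintro ⟨hne, h⟩
    refine ⟨hne, fun i hi hiw hlex => ?_⟩
    have hs : w.drop i <:+ w := List.drop_suffix i w
    have hsne : w.drop i ≠ [] := by
      intro h0
      have := congrArg List.length h0
      simp at this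
      omega
    have hsw : w.drop i ≠ w := by
      intro h0
      have := congrArg List.length h0
      simp at this
      omega
    exact lex_asymm r hlex (h _ hs hsne hsw)

/-- A CFL factorization: nonincreasing list of Lyndon words. -/
def IsCFL (L : List (List α)) : Prop :=
  (∀ x ∈ L, Lyn r x) ∧ List.Chain' (fun x y => ¬ List.Lex r x y) L

theorem not_chain'_extract {β : Type*} (R : β → β → Prop) :
    ∀ L : List β, ¬ List.Chain' R L →
      ∃ (L₁ : List β) (a b : β) (L₂ : List β), L = L₁ ++ a :: b :: L₂ ∧ ¬ R a b := by
  intro L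
  induction L with
  | nil => intro h; exact absurd List.isChain_nil h
  | cons a t ih =>
    intro h
    cases t with
    | nil => exact absurd (List.isChain_singleton a) h
    | cons b t' =>
      rw [List.Chain', List.isChain_cons_cons] at h
      rcases Classical.em (R a b) with hR | hR
      · have : ¬ List.Chain' R (b :: t') := fun hc => h ⟨hR, hc⟩
        obtain ⟨L₁, x, y, L₂, heq, hxy⟩ := ih this
        exact ⟨a :: L₁, x, y, L₂, by rw [heq]; rfl, hxy⟩
      · exact ⟨[], a, b, t', rfl, hR⟩

theorem exists_cfl_aux : ∀ (m : ℕ) (L : List (List α)), L.length ≤ m →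
    (∀ x ∈ L, Lyn r x) →
    ∃ L', IsCFL r L' ∧ L'.flatten = L.flatten := by
  intro m
  induction m with
  | zero =>
    intro L hL hall
    have : L = [] := List.length_eq_zero_iff.mp (by omega)
    subst this
    exact ⟨[], ⟨by simp, List.isChain_nil⟩, rfl⟩
  | succ m ih =>
    intro L hL hall
    by_cases hch : List.Chain' (fun x y => ¬ List.Lex r x y) L
    · exact ⟨L, ⟨hall, hch⟩, rfl⟩
    · obtain ⟨L₁, a, b, L₂, rfl, hab⟩ := not_chain'_extract _ L hch
      rw [not_not] at hab
      have ha : Lyn r a := hall a (by simp)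
      have hb : Lyn r b := hall b (by simp)
      have hmerge : Lyn r (a ++ b) := lyn_append r ha hb hab
      have hlen : (L₁ ++ (a ++ b) :: L₂).length ≤ m := by
        simp only [List.length_append, List.length_cons] at hL ⊢
        omega
      have hall' : ∀ x ∈ L₁ ++ (a ++ b) :: L₂, Lyn r x := by
        intro x hx
        rcases List.mem_append.mp hx with h1 | h1
        · exact hall x (by simp [h1])
        · rcases List.mem_cons.mp h1 with rfl | h2
          · exact hmerge
          · exact hall x (by simp [h2])
      obtain ⟨L', hL', hjoin⟩ := ih _ hlen hall'
      refine ⟨L', hL', ?_⟩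
      rw [hjoin]
      simp [List.flatten_append, List.append_assoc]

theorem exists_cfl (w : List α) : ∃ L, IsCFL r L ∧ L.flatten = w := by
  obtain ⟨L', hL', hjoin⟩ := exists_cfl_aux r (w.map (fun a => [a])).length
    (w.map (fun a => [a])) le_rfl (by
      intro x hx
      obtain ⟨a, _, rfl⟩ := List.mem_map.mp hx
      exact lyn_singleton r a)
  refine ⟨L', hL', ?_⟩
  rw [hjoin]
  clear hjoin hL' L'
  induction w with
  | nil => rfl
  | cons a t iht => simp only [List.map_cons, List.flatten_cons, List.singleton_append,
      List.cons.injEq, true_and]; exact iht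

/-- Bounding lemma: any nonempty prefix of a join of bounded nonempty words
has a nonempty suffix bounded by the bound. -/
theorem bound_of_prefix (c : List α) :
    ∀ L : List (List α), (∀ x ∈ L, x ≠ [] ∧ (x = c ∨ List.Lex r x c)) →
    ∀ s, s ≠ [] → s <+: L.flatten →
    ∃ t, t ≠ [] ∧ t <:+ s ∧ (t = c ∨ List.Lex r t c) := by
  intro L
  induction L with
  | nil =>
    intro _ s hsne hs
    simp only [List.flatten_nil, List.prefix_nil] at hs
    exact absurd hs hsne
  | cons u L' ih =>
    intro hall s hsne hs
    rw [List.flatten_cons] at hs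
    have hu := hall u (by simp)
    by_cases hlen : s.length ≤ u.length
    · have hsu : s <+: u := List.prefix_of_prefix_length_le hs (List.prefix_append u _) hlen
      refine ⟨s, hsne, List.suffix_refl s, ?_⟩
      rcases eq_or_ne s u with rfl | hne
      · exact hu.2
      · have h1 : List.Lex r s u := lex_of_prefix r hsu hne
        rcases hu.2 with rfl | h2
        · exact Or.inr h1
        · exact Or.inr (lex_trans r h1 h2)
    · have hus : u <+: s := List.prefix_of_prefix_length_le (List.prefix_append u _) hs (by omega)
      obtain ⟨s', rfl⟩ := hus
      have hs'ne : s' ≠ [] := by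
        rintro rfl
        simp at hlen
      have hs' : s' <+: L'.flatten := (List.prefix_append_right_inj u).mp hs
      obtain ⟨t, htne, hts, htc⟩ := ih (fun x hx => hall x (by simp [hx])) s' hs'ne hs'
      exact ⟨t, htne, hts.trans (List.suffix_append u s'), htc⟩

theorem lyn_prefix_length_le {u : List α} {L : List (List α)}
    (hall : ∀ x ∈ u :: L, Lyn r x)
    (hch : List.Chain' (fun x y => ¬ List.Lex r x y) (u :: L))
    {v : List α} (hv : Lyn r v) (hpre : v <+: (u :: L).flatten) :
    v.length ≤ u.length := by
  by_contra hlen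
  push_neg at hlen
  rw [List.flatten_cons] at hpre
  have hune : u ≠ [] := (hall u (by simp)).1
  have huv : u <+: v := List.prefix_of_prefix_length_le (List.prefix_append u _) hpre (by omega)
  obtain ⟨v', rfl⟩ := huv
  have hv'ne : v' ≠ [] := by
    rintro rfl
    simp at hlen
  have hv' : v' <+: L.flatten := (List.prefix_append_right_inj u).mp hpre
  have htrans : IsTrans (List α) (fun x y : List α => ¬ List.Lex r x y) := by
    constructor
    intro x y z h1 h2
    intro h3
    rcases lex_trich r x y with h4 | h4 | h4
    · exact h1 h4
    · exact h2 (h4 ▸ h3)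
    · rcases lex_trich r z y with h5 | h5 | h5
      · exact h1 (lex_trans r h3 h5)
      · exact h1 (h5 ▸ h3)
      · exact h2 h5
  have hpw := (by haveI := htrans; exact List.isChain_iff_pairwise.mp hch)
  have hboundL : ∀ x ∈ L, x ≠ [] ∧ (x = u ∨ List.Lex r x u) := by
    intro x hx
    refine ⟨(hall x (by simp [hx])).1, ?_⟩
    have := (List.pairwise_cons.mp hpw).1 x hx
    rcases lex_trich r x u with h1 | h1 | h1
    · exact Or.inr h1
    · exact Or.inl h1
    · exact absurd h1 this
  obtain ⟨t, htne, hts, htu⟩ := bound_of_prefix r u L hboundL v' hv'ne hv'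
  have htv : t <:+ u ++ v' := hts.trans (List.suffix_append u v')
  have htvne : t ≠ u ++ v' := by
    intro h0
    have h1 := congrArg List.length h0
    have h2 := hts.length_le
    simp only [List.length_append] at h1
    have : u.length = 0 := by omega
    exact hune (List.length_eq_zero_iff.mp this)
  have h1 : List.Lex r (u ++ v') t := hv.2 t htv htne htvne
  have h2 : List.Lex r u (u ++ v') := lex_append_of_ne_nil r hv'ne
  rcases htu with rfl | h3
  · exact lex_asymm r h1 h2
  · exact lex_asymm r (lex_trans r h1 h3) h2

theorem cfl_unique : ∀ L M : List (List α), IsCFL r L → IsCFL r M →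
    L.flatten = M.flatten → L = M := by
  intro L
  induction L with
  | nil =>
    intro M _ hM h
    cases M with
    | nil => rfl
    | cons v M' =>
      exfalso
      rw [List.flatten_nil, List.flatten_cons] at h
      have := (hM.1 v (by simp)).1
      rw [eq_comm, List.append_eq_nil_iff] at h
      exact this h.1
  | cons u L' ih =>
    intro M hL hM h
    cases M with
    | nil =>
      exfalso
      rw [List.flatten_nil, List.flatten_cons] at h
      have := (hL.1 u (by simp)).1
      rw [List.append_eq_nil_iff] at h
      exact this h.1
    | cons v M' =>
      have h1 : v.length ≤ u.length := by
        refine lyn_prefix_length_le r hL.1 hL.2 (hM.1 v (by simp)) ?_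
        rw [h, List.flatten_cons]
        exact List.prefix_append v _
      have h2 : u.length ≤ v.length := by
        refine lyn_prefix_length_le r hM.1 hM.2 (hL.1 u (by simp)) ?_
        rw [← h, List.flatten_cons]
        exact List.prefix_append u _
      have huv : u = v := by
        have hpu : u <+: (u :: L').flatten := by
          rw [List.flatten_cons]; exact List.prefix_append u _
        have hpv : v <+: (u :: L').flatten := by
          rw [h, List.flatten_cons]; exact List.prefix_append v _
        exact (List.prefix_of_prefix_length_le hpu hpv h2).eq_of_length (by omega)
      subst huv
      have h3 : L'.flatten = M'.flatten := by
        rw [List.flatten_cons, List.flatten_cons] at h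
        exact List.append_cancel_left h
      have hL' : IsCFL r L' := ⟨fun x hx => hL.1 x (by simp [hx]), hL.2.tail⟩
      have hM' : IsCFL r M' := ⟨fun x hx => hM.1 x (by simp [hx]), hM.2.tail⟩
      rw [ih M' hL' hM' h3]

end Lyndon

section Counting

set_option linter.deprecated false

/-- total size of a word of indecomposables -/
def wt (l : List Indec) : ℕ := (l.map fun a => a.1.1).sum

theorem wt_sigSumList (l : List Indec) : (sigSumList (l.map Subtype.val)).1 = wt l := by
  erw [sigSumList_fst, wt, List.map_map]
  rfl

theorem wt_pos {w : List Indec} (hw : w ≠ []) : 0 < wt w := by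
  cases w with
  | nil => exact absurd rfl hw
  | cons a t =>
    have := indec_size_pos a
    simp only [wt, List.map_cons, List.sum_cons]
    omega

theorem wt_append (u v : List Indec) : wt (u ++ v) = wt u + wt v := by
  simp [wt]

theorem wt_flatten (L : List (List Indec)) : wt L.flatten = (L.map wt).sum := by
  induction L with
  | nil => rfl
  | cons u t ih => rw [List.flatten_cons, wt_append, ih, List.map_cons, List.sum_cons]

/-- slice of `PermSig` of size `N` is equivalent to permutations of `Fin N` -/
noncomputable def sigSliceEquiv (N : ℕ) : {p : PermSig // p.1 = N} ≃ Equiv.Perm (Fin N) where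
  toFun := fun p => Equiv.permCongr (finCongr p.2) p.1.2
  invFun := fun π => ⟨⟨N, π⟩, rfl⟩
  left_inv := by
    rintro ⟨⟨n, π⟩, hp⟩
    have hp' : n = N := hp
    subst hp'
    refine Subtype.ext (Sigma.ext rfl (heq_of_eq ?_))
    ext i
    simp [Equiv.permCongr_apply]
  right_inv := by
    intro π
    ext i
    simp [Equiv.permCongr_apply]

theorem toSig_bijective (N : ℕ) :
    Function.Bijective (fun w : {w : List Indec // wt w = N} =>
      (⟨sigSumList (w.1.map Subtype.val), by rw [wt_sigSumList, w.2]⟩ :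
        {p : PermSig // p.1 = N})) := by
  constructor
  · intro a b hab
    exact Subtype.ext (bd_unique _ _ (congrArg Subtype.val hab))
  · rintro ⟨p, hp⟩
    obtain ⟨l, hl⟩ := bd_exists p
    exact ⟨⟨l, by rw [← wt_sigSumList, hl, hp]⟩, Subtype.ext hl⟩

theorem card_words (N : ℕ) : Nat.card {w : List Indec // wt w = N} = N.factorial := by
  rw [Nat.card_eq_of_bijective _ (toSig_bijective N), Nat.card_congr (sigSliceEquiv N),
    Nat.card_eq_fintype_card, Fintype.card_perm, Fintype.card_fin]

theorem finite_words (N : ℕ) : Finite {w : List Indec // wt w = N} := by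
  haveI : Finite {p : PermSig // p.1 = N} := Finite.of_equiv _ (sigSliceEquiv N).symm
  exact Finite.of_injective _ (toSig_bijective N).injective

variable (r : Indec → Indec → Prop) [hsto : IsStrictTotalOrder Indec r]

theorem finite_lyndon (n : ℕ) : Finite {w : List Indec // Lyn r w ∧ wt w = n} := by
  haveI := finite_words n
  refine Finite.of_injective
    (fun w => (⟨w.1, w.2.2⟩ : {w : List Indec // wt w = n})) ?_
  intro a b hab
  have h2 := congrArg Subtype.val hab
  simp only at h2
  exact Subtype.ext h2

/-- Lyndon permutations of size `n` are in bijection with Lyndon words of weight `n`. -/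
theorem card_lyndon_perm (n : ℕ) :
    Nat.card {p : PermSig // p.1 = n ∧ IsLyndonPermWrt r p.2} =
      Nat.card {w : List Indec // Lyn r w ∧ wt w = n} := by
  refine (Nat.card_eq_of_bijective
    (fun w : {w : List Indec // Lyn r w ∧ wt w = n} =>
      (⟨sigSumList (w.1.map Subtype.val), by rw [wt_sigSumList, w.2.2],
        ⟨w.1, rfl, (isLyndonWord_iff_lyn r w.1).mpr w.2.1⟩⟩ :
        {p : PermSig // p.1 = n ∧ IsLyndonPermWrt r p.2})) ?_).symm
  constructor
  · intro a b hab
    exact Subtype.ext (bd_unique _ _ (congrArg Subtype.val hab))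
  · rintro ⟨p, hp1, l, hbd, hlw⟩
    have hbd' : sigSumList (l.map Subtype.val) = p := by
      rw [IsBlockDecomposition] at hbd
      rw [hbd]
    refine ⟨⟨l, (isLyndonWord_iff_lyn r l).mp hlw, ?_⟩, Subtype.ext hbd'⟩
    rw [← wt_sigSumList, hbd', hp1]

/-- the geometric series `(1 - X^n)⁻¹` -/
theorem geom_inv {n : ℕ} (hn : 1 ≤ n) :
    (1 - PowerSeries.X ^ n : PowerSeries ℚ)⁻¹ =
      PowerSeries.mk (fun k => if n ∣ k then 1 else 0) := by
  rw [PowerSeries.inv_eq_iff_mul_eq_one]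
  · ext k
    rw [mul_sub, mul_one, map_sub, PowerSeries.coeff_mul_X_pow', PowerSeries.coeff_mk,
      PowerSeries.coeff_one]
    by_cases hk : k = 0
    · subst hk
      simp [Nat.not_succ_le_zero, hn, Nat.lt_of_lt_of_le Nat.zero_lt_one hn]
      intro h
      omega
    · by_cases hd : n ∣ k
      · have h1 : n ≤ k := Nat.le_of_dvd (Nat.pos_of_ne_zero hk) hd
        have h2 : n ∣ k - n := (Nat.dvd_sub hd dvd_rfl)
        rw [if_pos hd, if_pos h1, PowerSeries.coeff_mk, if_pos h2, if_neg hk]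
        ring
      · rw [if_neg hd, if_neg hk]
        by_cases h1 : n ≤ k
        · have h2 : ¬ n ∣ k - n := by
            intro h
            exact hd (by
              have := Nat.dvd_add h (dvd_refl n)
              rwa [Nat.sub_add_cancel h1] at this)
          rw [if_pos h1, PowerSeries.coeff_mk, if_neg h2]
          ring
        · rw [if_neg h1]
          ring
  · rw [map_sub, map_pow, map_one, PowerSeries.constantCoeff_X, zero_pow (by omega), sub_zero]
    exact one_ne_zero

end Counting

section MainCount

set_option linter.deprecated false
set_option maxHeartbeats 1000000

theorem geR_isTrans {β : Type*} (rb : β → β → Prop) [IsStrictTotalOrder β rb] :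
    IsTrans (List β) (fun x y => ¬ List.Lex rb x y) := by
  constructor
  intro x y z h1 h2 h3
  rcases lex_trich rb x y with h4 | h4 | h4
  · exact h1 h4
  · exact h2 (h4 ▸ h3)
  · rcases lex_trich rb z y with h5 | h5 | h5
    · exact h1 (lex_trans rb h3 h5)
    · exact h1 (h5 ▸ h3)
    · exact h2 h5

theorem geR_isAntisymm {β : Type*} (rb : β → β → Prop) [IsStrictTotalOrder β rb] :
    IsAntisymm (List β) (fun x y => ¬ List.Lex rb x y) := by
  constructor
  intro x y h1 h2
  rcases lex_trich rb x y with h | h | h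
  · exact absurd h h1
  · exact h
  · exact absurd h h2

theorem geR_isTotal {β : Type*} (rb : β → β → Prop) [IsStrictTotalOrder β rb] :
    IsTotal (List β) (fun x y => ¬ List.Lex rb x y) := by
  constructor
  intro x y
  by_cases h : List.Lex rb x y
  · exact Or.inr fun h2 => lex_asymm rb h h2
  · exact Or.inl h

theorem count_mul_sum [DecidableEq (List Indec)] (B : Finset (List Indec)) :
    ∀ L : List (List Indec), (∀ x ∈ L, x ∈ B) →
      ∑ w ∈ B, Multiset.count w (↑L : Multiset (List Indec)) * wt w = wt L.flatten := by
  intro L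
  induction L with
  | nil => intro _; simp [wt]
  | cons u t ih =>
    intro hmem
    have hu : u ∈ B := hmem u (by simp)
    rw [List.flatten_cons, wt_append]
    have step1 : ∑ w ∈ B, Multiset.count w (↑(u :: t) : Multiset (List Indec)) * wt w
        = ∑ w ∈ B, (Multiset.count w (↑t : Multiset (List Indec)) * wt w
            + if w = u then wt w else 0) := by
      refine Finset.sum_congr rfl fun w _ => ?_
      rw [show (↑(u :: t) : Multiset (List Indec)) = u ::ₘ (↑t : Multiset (List Indec))
        from rfl, Multiset.count_cons]
      by_cases hwu : w = u <;> simp [hwu, add_mul]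
    rw [step1, Finset.sum_add_distrib, ih (fun x hx => hmem x (by simp [hx])),
      Finset.sum_ite_eq' B u (fun w => wt w), if_pos hu, Nat.add_comm]

/-- the count Finsupp associated to a factorization -/
noncomputable def dof [DecidableEq (List Indec)] (B : Finset (List Indec))
    (L : List (List Indec)) : (List Indec) →₀ ℕ :=
  Finsupp.onFinset B
    (fun w => if w ∈ B then Multiset.count w (↑L : Multiset (List Indec)) * wt w else 0)
    (fun w hw => by by_contra hc; simp [hc] at hw)

theorem dof_apply [DecidableEq (List Indec)] (B : Finset (List Indec))
    (L : List (List Indec)) (w : List Indec) :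
    dof B L w = if w ∈ B then Multiset.count w (↑L : Multiset (List Indec)) * wt w else 0 :=
  Finsupp.onFinset_apply

variable (r : Indec → Indec → Prop) [hsto : IsStrictTotalOrder Indec r]

theorem all_mem_B {N : ℕ} {B : Finset (List Indec)}
    (hmemB : ∀ w, w ∈ B ↔ Lyn r w ∧ wt w ≤ N)
    {L : List (List Indec)} (hL : IsCFL r L) (hN : wt L.flatten = N) :
    ∀ x ∈ L, x ∈ B := by
  intro x hx
  refine (hmemB x).mpr ⟨hL.1 x hx, ?_⟩
  rw [← hN, wt_flatten]
  exact List.single_le_sum (fun y _ => Nat.zero_le y) _ (List.mem_map_of_mem (f := wt) hx)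

theorem dof_bijective [DecidableEq (List Indec)] (N : ℕ) (B : Finset (List Indec))
    (hmemB : ∀ w, w ∈ B ↔ Lyn r w ∧ wt w ≤ N) :
    Function.Bijective (fun L : {L : List (List Indec) // IsCFL r L ∧ wt L.flatten = N} =>
      (⟨dof B L.1, by
        have hall := all_mem_B r hmemB L.2.1 L.2.2
        refine ⟨⟨?_, Finsupp.support_onFinset_subset⟩, ?_⟩
        · rw [show (∑ w ∈ B, dof B L.1 w) = ∑ w ∈ B,
            Multiset.count w (↑L.1 : Multiset (List Indec)) * wt w from
            Finset.sum_congr rfl fun w hw => by rw [dof_apply, if_pos hw]]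
          rw [count_mul_sum B L.1 hall, L.2.2]
        · intro w hw
          rw [dof_apply, if_pos hw]
          exact dvd_mul_left _ _⟩ :
      {d : (List Indec) →₀ ℕ //
        ((∑ w ∈ B, d w) = N ∧ d.support ⊆ B) ∧ ∀ w ∈ B, wt w ∣ d w})) := by
  haveI htr := geR_isTrans r
  haveI has := geR_isAntisymm r
  haveI hto := geR_isTotal r
  constructor
  · intro a b hab
    have h2 : dof B a.1 = dof B b.1 := congrArg Subtype.val hab
    have halla := all_mem_B r hmemB a.2.1 a.2.2
    have hallb := all_mem_B r hmemB b.2.1 b.2.2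
    have hcount : ∀ w, Multiset.count w (↑a.1 : Multiset (List Indec)) =
        Multiset.count w (↑b.1 : Multiset (List Indec)) := by
      intro w
      by_cases hw : w ∈ B
      · have h3 := congrArg (fun d => d w) h2
        simp only [dof_apply, if_pos hw] at h3
        have hwt : 0 < wt w := wt_pos ((hmemB w).mp hw).1.1
        exact Nat.eq_of_mul_eq_mul_right hwt h3
      · rw [Multiset.count_eq_zero.mpr, Multiset.count_eq_zero.mpr]
        · intro hmem; exact hw (hallb w (by simpa using hmem))
        · intro hmem; exact hw (halla w (by simpa using hmem))
    have hperm : (↑a.1 : Multiset (List Indec)) = ↑b.1 := Multiset.ext.mpr hcount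
    have hperm2 : a.1.Perm b.1 := Multiset.coe_eq_coe.mp hperm
    have hsorted1 : List.Pairwise (fun x y => ¬ List.Lex r x y) a.1 :=
      List.isChain_iff_pairwise.mp a.2.1.2
    have hsorted2 : List.Pairwise (fun x y => ¬ List.Lex r x y) b.1 :=
      List.isChain_iff_pairwise.mp b.2.1.2
    exact Subtype.ext (List.Perm.eq_of_pairwise' hsorted1 hsorted2 hperm2)
  · rintro ⟨d, ⟨hsum, hsupp⟩, hdvd⟩
    haveI hdec : DecidableRel (fun x y : List Indec => ¬ List.Lex r x y) :=
      fun x y => Classical.dec _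
    set M : Multiset (List Indec) :=
      ∑ w ∈ B, Multiset.replicate (d w / wt w) w with hM
    set L : List (List Indec) := Multiset.sort M (fun x y => ¬ List.Lex r x y) with hLdef
    have hLM : (↑L : Multiset (List Indec)) = M :=
      Multiset.sort_eq M (fun x y => ¬ List.Lex r x y)
    have hallB : ∀ x ∈ L, x ∈ B := by
      intro x hx
      have : x ∈ M := by rw [← hLM]; exact hx
      rw [hM] at this
      obtain ⟨w, hw, hx2⟩ := Multiset.mem_sum.mp this
      rw [Multiset.mem_replicate] at hx2
      rw [hx2.2]
      exact hw
    have hcount : ∀ w ∈ B, Multiset.count w (↑L : Multiset (List Indec)) = d w / wt w := by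
      intro w hw
      rw [hLM, hM, Multiset.count_sum']
      rw [Finset.sum_congr rfl fun v _ => Multiset.count_replicate w v (d v / wt v)]
      rw [Finset.sum_ite_eq' B w (fun v => d v / wt v), if_pos hw]
    have hIsCFL : IsCFL r L := by
      constructor
      · intro x hx
        exact ((hmemB x).mp (hallB x hx)).1
      · have hsorted := Multiset.pairwise_sort M (fun x y => ¬ List.Lex r x y)
        rw [← hLdef] at hsorted
        exact List.isChain_iff_pairwise.mpr hsorted
    have hwtflat : wt L.flatten = N := by
      rw [← count_mul_sum B L hallB]
      rw [Finset.sum_congr rfl fun w hw => by rw [hcount w hw,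
        Nat.div_mul_cancel (hdvd w hw)]]
      exact hsum
    refine ⟨⟨L, hIsCFL, hwtflat⟩, Subtype.ext ?_⟩
    ext w
    rw [dof_apply]
    by_cases hw : w ∈ B
    · rw [if_pos hw, hcount w hw, Nat.div_mul_cancel (hdvd w hw)]
    · rw [if_neg hw]
      exact (Finsupp.notMem_support_iff.mp (fun hmem => hw (hsupp hmem))).symm

theorem flatten_bijective (N : ℕ) :
    Function.Bijective (fun L : {L : List (List Indec) // IsCFL r L ∧ wt L.flatten = N} =>
      (⟨L.1.flatten, L.2.2⟩ : {w : List Indec // wt w = N})) := by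
  constructor
  · intro a b hab
    have h2 : a.1.flatten = b.1.flatten := congrArg Subtype.val hab
    exact Subtype.ext (cfl_unique r _ _ a.2.1 b.2.1 h2)
  · rintro ⟨w, hw⟩
    obtain ⟨L, hL, hjoin⟩ := exists_cfl r w
    exact ⟨⟨L, hL, by rw [hjoin]; exact hw⟩, Subtype.ext hjoin⟩

end MainCount

set_option maxHeartbeats 2000000

/-- The power-series identity `∏_{n ≥ 1} (1 - x^n)^{-ℓ_n} = Σ_{n ≥ 0} n! x^n`, where
`ℓ_n` is the number of Lyndon permutations of size exactly `n` with respect to any fixed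
linear order on the alphabet of indecomposable permutations.  Since the factor for size
`n` does not affect coefficients of degree less than `n`, the identity is expressed
coefficientwise: the coefficient of `x^N` in `∏_{n = 1}^{N} (1 - x^n)^{-ℓ_n}` is `N!`. -/
theorem lyndon_generating_function (r : Indec → Indec → Prop)
    (hr : IsStrictTotalOrder Indec r) (ℓ : ℕ → ℕ)
    (hℓ : ∀ n, ℓ n = Nat.card {p : PermSig // p.1 = n ∧ IsLyndonPermWrt r p.2}) :
    ∀ N : ℕ,
      PowerSeries.coeff (R := ℚ) N (∏ n ∈ Finset.Icc 1 N, ((1 - PowerSeries.X ^ n)⁻¹) ^ ℓ n)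
        = (N.factorial : ℚ) := by
  haveI := hr
  intro N
  classical
  have hfinL : ∀ n : ℕ, {w : List Indec | Lyn r w ∧ wt w = n}.Finite := fun n => by
    haveI : Finite ↥{w : List Indec | Lyn r w ∧ wt w = n} := finite_lyndon r n
    exact Set.toFinite _
  set LWF : ℕ → Finset (List Indec) := fun n => (hfinL n).toFinset with hLWFdef
  have hmemLWF : ∀ n w, w ∈ LWF n ↔ Lyn r w ∧ wt w = n := fun n w => by
    simp [hLWFdef, Set.Finite.mem_toFinset]
  have hcardLWF : ∀ n, (LWF n).card = ℓ n := fun n => by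
    rw [hℓ n, card_lyndon_perm r n]
    rw [show Nat.card {w : List Indec // Lyn r w ∧ wt w = n}
      = Nat.card ↥{w : List Indec | Lyn r w ∧ wt w = n} from rfl]
    rw [Nat.card_coe_set_eq, Set.ncard_eq_toFinset_card _ (hfinL n)]
  set B : Finset (List Indec) := (Finset.Icc 1 N).biUnion LWF with hBdef
  have hmemB : ∀ w, w ∈ B ↔ Lyn r w ∧ wt w ≤ N := fun w => by
    rw [hBdef, Finset.mem_biUnion]
    constructor
    · rintro ⟨n, hn, hw⟩
      rw [hmemLWF] at hw
      rw [Finset.mem_Icc] at hn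
      exact ⟨hw.1, hw.2 ▸ hn.2⟩
    · rintro ⟨h1, h2⟩
      exact ⟨wt w, Finset.mem_Icc.mpr ⟨wt_pos h1.1, h2⟩, (hmemLWF _ w).mpr ⟨h1, rfl⟩⟩
  have hdisj : (↑(Finset.Icc 1 N) : Set ℕ).PairwiseDisjoint LWF := by
    intro m hm n hn hmn
    refine Finset.disjoint_left.mpr fun {w} h1 h2 => ?_
    rw [hmemLWF] at h1 h2
    exact hmn (h1.2.symm.trans h2.2)
  have hprod : (∏ n ∈ Finset.Icc 1 N, ((1 - PowerSeries.X ^ n : PowerSeries ℚ)⁻¹) ^ ℓ n)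
      = ∏ w ∈ B, PowerSeries.mk (fun k => if wt w ∣ k then (1 : ℚ) else 0) := by
    rw [hBdef, Finset.prod_biUnion hdisj]
    refine Finset.prod_congr rfl fun n hn => ?_
    have hn1 : 1 ≤ n := (Finset.mem_Icc.mp hn).1
    rw [Finset.prod_congr rfl fun w hw =>
      show PowerSeries.mk (fun k => if wt w ∣ k then (1:ℚ) else 0)
        = PowerSeries.mk (fun k => if n ∣ k then (1:ℚ) else 0) from by
        rw [((hmemLWF n w).mp hw).2]]
    rw [Finset.prod_const, hcardLWF n, geom_inv hn1]
  rw [hprod, PowerSeries.coeff_prod]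
  simp only [PowerSeries.coeff_mk, Finset.prod_boole, Finset.sum_boole]
  have h1 := Nat.card_eq_of_bijective _ (dof_bijective r N B hmemB)
  have h2 := Nat.card_eq_of_bijective _ (flatten_bijective r N)
  have key : ∀ S : Finset ((List Indec) →₀ ℕ),
      (∀ d, d ∈ S ↔ (((∑ w ∈ B, d w) = N ∧ d.support ⊆ B) ∧ ∀ w ∈ B, wt w ∣ d w)) →
      ((S.card : ℚ) = (N.factorial : ℚ)) := by
    intro S hS
    have hc : S.card = N.factorial := by
      rw [← Nat.card_eq_finsetCard, Nat.card_congr (Equiv.subtypeEquivRight hS)]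
      exact (h1.symm.trans h2).trans (card_words N)
    exact_mod_cast hc
  apply key
  intro d
  simp only [Finset.mem_filter, Finset.mem_finsuppAntidiag]
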